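/- Let τ_c, ε, δ, α, T ∈ ℝ with |δ| ≤ T, |τ_c + ε| > |ε|, and 2·α·(|τ_c + ε| − |ε|) > T·(|τ_c + ε| + |ε|). Then τ_c·(−2·α·sgn(τ_c + ε) + δ) < 0. -/
import Mathlib

/-- Key Lyapunov-derivative inequality of Theorem 1 (stability of the SMC
theory-based learning algorithm): with |δ| ≤ T, |τ_c + ε| > |ε| and
2α(|τ_c + ε| − |ε|) > T(|τ_c + ε| + |ε|), one has
τ_c·(−2α·sgn(τ_c + ε) + δ) < 0. -/
theorem stmt_8 (τc ε δ α T : ℝ) (hδ : |δ| ≤ T) (hne : |ε| < |τc + ε|)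
    (hα : T * (|τc + ε| + |ε|) < 2 * α * (|τc + ε| - |ε|)) :
    τc * (-2 * α * Real.sign (τc + ε) + δ) < 0 := by
  have hd : (0:ℝ) < |τc + ε| - |ε| := by linarith
  have hT : 0 ≤ T := le_trans (abs_nonneg δ) hδ
  have h2α : T < 2 * α := by
    nlinarith [abs_nonneg ε]
  have hδ2 : |δ| < 2 * α := lt_of_le_of_lt hδ h2α
  rcases lt_trichotomy (τc + ε) 0 with h | h | h
  · have hτ : τc < 0 := by
      have : -(τc + ε) = |τc + ε| := (abs_of_neg h).symm
      nlinarith [le_abs_self ε, neg_abs_le ε]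
    rw [Real.sign_of_neg h]
    have : 0 < -2 * α * (-1) + δ := by
      have := neg_abs_le δ
      nlinarith
    nlinarith
  · simp [h] at hne
    linarith [abs_nonneg ε]
  · have hτ : 0 < τc := by
      have : τc + ε = |τc + ε| := (abs_of_pos h).symm
      nlinarith [le_abs_self ε, neg_abs_le ε]
    rw [Real.sign_of_pos h]
    have : -2 * α * 1 + δ < 0 := by
      have := le_abs_self δ
      nlinarith
    nlinarith
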